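/- Marginal cost supply curve (Theorem 2): suppose the law of the random supply vector s is absolutely continuous with respect to Lebesgue measure on ℝ^N, has compact support contained in ℝ₊^N. Then the function Q*(x) = c_0 · E[ Σ_{ℓ=1}^N max{0, −ξ_ℓ(x, s)} ] is differentiable at every x ∈ (0,∞)^N, with partial derivatives ∂Q*(x)/∂x_k = ζ_k(x) = c_0 [ P(ξ_k ≤ 0) + Σ_{t=k+1}^N P(ξ_k > 0, …, ξ_{t−1} > 0, ξ_t ≤ 0) ] for every k = 1,…,N. -/

import Mathlib

open MeasureTheory

/-- The residual process: `ξ_0 = 0`, `ξ_{k+1} = max{0, ξ_k} + s_k - x_{k+1}`. -/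
noncomputable def resid (x s : ℕ → ℝ) : ℕ → ℝ
  | 0 => 0
  | k + 1 => max 0 (resid x s k) + s k - x (k + 1)

/-- The demand vector `x ∈ ℝ^N` (coordinates `x_1, …, x_N`) associated with
`y ∈ Fin N → ℝ`: `x_j = y_{j-1}` for `1 ≤ j ≤ N` and `x_j = 0` otherwise. -/
def demandOf (N : ℕ) (y : Fin N → ℝ) : ℕ → ℝ := fun j =>
  if h : 1 ≤ j ∧ j ≤ N then y ⟨j - 1, by omega⟩ else 0

/-- The marginal cost price menu
`ζ_k(x) = c_0 [ P(ξ_k ≤ 0) + Σ_{t=k+1}^N P(ξ_k > 0, …, ξ_{t-1} > 0, ξ_t ≤ 0) ]`. -/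
noncomputable def zetaPrice (N : ℕ) {Ω : Type*} [MeasurableSpace Ω] (P : Measure Ω)
    (s : Ω → ℕ → ℝ) (c0 : ℝ) (x : ℕ → ℝ) (k : ℕ) : ℝ :=
  c0 * ((P {ω | resid x (s ω) k ≤ 0}).toReal +
    ∑ t ∈ Finset.Icc (k + 1) N,
      (P {ω | (∀ j, k ≤ j → j < t → 0 < resid x (s ω) j) ∧
        resid x (s ω) t ≤ 0}).toReal)

/-- The minimum expected cost of firm supply
`Q*(x) = c_0 · E[ Σ_{ℓ=1}^N max{0, -ξ_ℓ(x, s)} ]`, as a function of `y ∈ Fin N → ℝ`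
(the demand bundle `(x_1, …, x_N)`). -/
noncomputable def Qstar (N : ℕ) {Ω : Type*} [MeasurableSpace Ω] (P : Measure Ω)
    (s : Ω → ℕ → ℝ) (c0 : ℝ) (y : Fin N → ℝ) : ℝ :=
  c0 * ∫ ω, ∑ l ∈ Finset.Icc 1 N, max 0 (-(resid (demandOf N y) (s ω) l)) ∂P

section Aux

open Finset

lemma resid_congr (x : ℕ → ℝ) {w w' : ℕ → ℝ} :
    ∀ l, (∀ j, j < l → w j = w' j) → resid x w l = resid x w' l := by
  intro l
  induction l with
  | zero => intro; simp [resid]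
  | succ k ih =>
    intro h
    simp only [resid]
    rw [ih (fun j hj => h j (by omega)), h k (by omega)]

lemma continuous_residw (x : ℕ → ℝ) (l : ℕ) :
    Continuous fun w : ℕ → ℝ => resid x w l := by
  induction l with
  | zero => simpa [resid] using continuous_const
  | succ k ih =>
    simp only [resid]
    exact (((continuous_const.max ih).add (continuous_apply k)).sub continuous_const)

lemma continuous_demandOf (N : ℕ) (j : ℕ) :
    Continuous fun y : Fin N → ℝ => demandOf N y j := by
  unfold demandOf
  by_cases h : 1 ≤ j ∧ j ≤ N
  · simpa [h] using continuous_apply (⟨j - 1, by omega⟩ : Fin N)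
  · simpa [h] using continuous_const

lemma continuous_residy (N : ℕ) (w : ℕ → ℝ) (l : ℕ) :
    Continuous fun y : Fin N → ℝ => resid (demandOf N y) w l := by
  induction l with
  | zero => simpa [resid] using continuous_const
  | succ k ih =>
    simp only [resid]
    exact ((continuous_const.max ih).add continuous_const).sub (continuous_demandOf N (k+1))

lemma abs_resid_le (x w : ℕ → ℝ) : ∀ l,
    |resid x w l| ≤ (∑ j ∈ range l, |w j|) + ∑ j ∈ Icc 1 l, |x j| := by
  intro l
  induction l with
  | zero => simp [resid]
  | succ k ih =>
    simp only [resid]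
    have h1 : |max 0 (resid x w k)| ≤ |resid x w k| := by
      rcases le_total (resid x w k) 0 with h | h
      · simp [max_eq_left h]
      · simp [max_eq_right h, abs_of_nonneg h]
    calc |max 0 (resid x w k) + w k - x (k+1)|
        ≤ |max 0 (resid x w k)| + |w k| + |x (k+1)| := by
          calc |max 0 (resid x w k) + w k - x (k+1)| ≤ |max 0 (resid x w k) + w k| + |x (k+1)| :=
            abs_sub (max 0 (resid x w k) + w k) (x (k+1))
          _ ≤ |max 0 (resid x w k)| + |w k| + |x (k+1)| := by
            gcongr; exact abs_add_le _ _
      _ ≤ ((∑ j ∈ range k, |w j|) + ∑ j ∈ Icc 1 k, |x j|) + |w k| + |x (k+1)| := by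
          gcongr; exact h1.trans ih
      _ = ((∑ j ∈ range (k+1), |w j|) + ∑ j ∈ Icc 1 (k+1), |x j|) := by
          rw [Finset.sum_range_succ, Finset.sum_Icc_succ_top (by omega)]
          ring

lemma abs_resid_sub_resid_le (w : ℕ → ℝ) (x x' : ℕ → ℝ) : ∀ l,
    |resid x w l - resid x' w l| ≤ ∑ j ∈ Icc 1 l, |x j - x' j| := by
  intro l
  induction l with
  | zero => simp [resid]
  | succ k ih =>
    simp only [resid]
    have h1 : |max 0 (resid x w k) - max 0 (resid x' w k)| ≤ |resid x w k - resid x' w k| := by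
      simpa [max_comm] using abs_max_sub_max_le_abs (resid x w k) (resid x' w k) 0
    calc |max 0 (resid x w k) + w k - x (k+1) - (max 0 (resid x' w k) + w k - x' (k+1))|
        = |(max 0 (resid x w k) - max 0 (resid x' w k)) + (x' (k+1) - x (k+1))| := by ring_nf
      _ ≤ |max 0 (resid x w k) - max 0 (resid x' w k)| + |x' (k+1) - x (k+1)| := abs_add_le _ _
      _ ≤ (∑ j ∈ Icc 1 k, |x j - x' j|) + |x (k+1) - x' (k+1)| := by
          rw [abs_sub_comm (x' (k+1))]; gcongr; exact h1.trans ih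
      _ = ∑ j ∈ Icc 1 (k+1), |x j - x' j| := (Finset.sum_Icc_succ_top (by omega) _).symm

end Aux
section Aux2

open Finset

lemma measurable_residw (x : ℕ → ℝ) (l : ℕ) :
    Measurable fun w : ℕ → ℝ => resid x w l :=
  (continuous_residw x l).measurable

/-- padding a `Fin N` vector to `ℕ → ℝ` -/
noncomputable def padVec (N : ℕ) (v : Fin N → ℝ) : ℕ → ℝ :=
  fun j => if h : j < N then v ⟨j, h⟩ else 0

lemma measurable_padVec (N : ℕ) : Measurable (padVec N) := by
  apply measurable_pi_lambda
  intro j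
  unfold padVec
  by_cases h : j < N
  · simpa [h] using measurable_pi_apply (⟨j, h⟩ : Fin N)
  · simp [h]

lemma volume_resid_zero (N : ℕ) (x : ℕ → ℝ) (l : ℕ) (h1 : 1 ≤ l) (hlN : l ≤ N) :
    (volume : Measure (Fin N → ℝ)) {v | resid x (padVec N v) l = 0} = 0 := by
  obtain ⟨n, rfl⟩ : ∃ n, N = n + 1 := ⟨N - 1, by omega⟩
  set i₀ : Fin (n + 1) := ⟨l - 1, by omega⟩ with hi₀
  set T := MeasurableEquiv.piFinSuccAbove (fun _ : Fin (n+1) => ℝ) i₀ with hT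
  have hTmp : MeasurePreserving T :=
    volume_preserving_piFinSuccAbove (fun _ : Fin (n+1) => ℝ) i₀
  set G : (Fin n → ℝ) → ℝ :=
    fun u => x l - max 0 (resid x (padVec (n+1) (T.symm (0, u))) (l - 1)) with hG
  have hGmeas : Measurable G := by
    apply measurable_const.sub
    apply measurable_const.max
    exact (measurable_residw x (l-1)).comp
      ((measurable_padVec (n+1)).comp (T.symm.measurable.comp measurable_prodMk_left))
  set S : Set (ℝ × (Fin n → ℝ)) := {p | p.1 = G p.2} with hS
  have hSmeas : MeasurableSet S :=
    measurableSet_eq_fun measurable_fst (hGmeas.comp measurable_snd)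
  have hpre : {v : Fin (n+1) → ℝ | resid x (padVec (n+1) v) l = 0} = ⇑T ⁻¹' S := by
    ext v
    have hTv1 : (T v).1 = v i₀ := rfl
    have hresid : resid x (padVec (n+1) (T.symm (0, (T v).2))) (l-1)
        = resid x (padVec (n+1) v) (l-1) := by
      apply resid_congr
      intro j hj
      unfold padVec
      by_cases hjn : j < n + 1
      · simp only [hjn, dif_pos]
        have hne : (⟨j, hjn⟩ : Fin (n+1)) ≠ i₀ := by
          simp only [hi₀, ne_eq, Fin.mk.injEq]
          omega
        obtain ⟨m, hm⟩ := Fin.exists_succAbove_eq hne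
        have key : T.symm (0, (T v).2) (i₀.succAbove m) = (T v).2 m := by
          have h0 := T.apply_symm_apply ((0 : ℝ), (T v).2)
          have h2 : (T (T.symm (0, (T v).2))).2 = (T v).2 := by rw [h0]
          calc T.symm (0, (T v).2) (i₀.succAbove m)
              = (T (T.symm (0, (T v).2))).2 m := rfl
            _ = (T v).2 m := by rw [h2]
        rw [hm] at key
        rw [key, ← hm]
        rfl
      · simp [hjn]
    have hl' : l = (l - 1) + 1 := by omega
    have hpad : padVec (n+1) v (l-1) = v i₀ := dif_pos (show l - 1 < n + 1 by omega)
    constructor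
    · intro hv
      simp only [Set.mem_preimage, hS, Set.mem_setOf_eq, hTv1, hG, hresid]
      have hthis : resid x (padVec (n+1) v) l = 0 := hv
      rw [hl'] at hthis
      simp only [resid] at hthis
      rw [hpad, ← hl'] at hthis
      linarith
    · intro hv
      simp only [Set.mem_preimage, hS, Set.mem_setOf_eq, hTv1, hG, hresid] at hv
      show resid x (padVec (n+1) v) l = 0
      rw [hl']
      simp only [resid]
      rw [hpad, ← hl']
      linarith
  rw [hpre, hTmp.measure_preimage hSmeas.nullMeasurableSet, MeasureTheory.Measure.volume_eq_prod,
    MeasureTheory.Measure.prod_apply_symm hSmeas]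
  have hz : ∀ u : Fin n → ℝ, (volume : Measure ℝ) ((fun a => (a, u)) ⁻¹' S) = 0 := by
    intro u
    have : ((fun a => (a, u)) ⁻¹' S) = {G u} := by ext a; simp [hS]
    rw [this]
    exact measure_singleton _
  simp [hz]

end Aux2
section Aux3

open Finset

variable {Ω : Type*} [MeasurableSpace Ω] (P : Measure Ω) (s : Ω → ℕ → ℝ)

lemma measurable_resid_omega (hmeas : Measurable s) (x : ℕ → ℝ) (l : ℕ) :
    Measurable fun ω => resid x (s ω) l :=
  (measurable_residw x l).comp hmeas

lemma P_resid_tie_zero (N : ℕ) (hmeas : Measurable s)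
    (hac : P.map (fun ω => fun i : Fin N => s ω i) ≪ (volume : Measure (Fin N → ℝ)))
    (x : ℕ → ℝ) (l : ℕ) (h1 : 1 ≤ l) (hlN : l ≤ N) :
    P {ω | resid x (s ω) l = 0} = 0 := by
  set f : Ω → (Fin N → ℝ) := fun ω => fun i : Fin N => s ω i with hf
  have hfm : Measurable f :=
    measurable_pi_lambda _ fun i => (measurable_pi_apply (i : ℕ)).comp hmeas
  have hEv : MeasurableSet {v : Fin N → ℝ | resid x (padVec N v) l = 0} :=
    measurableSet_eq_fun ((measurable_residw x l).comp (measurable_padVec N)) measurable_const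
  have hset : {ω | resid x (s ω) l = 0} = f ⁻¹' {v | resid x (padVec N v) l = 0} := by
    ext ω
    have : resid x (padVec N (f ω)) l = resid x (s ω) l := by
      apply resid_congr
      intro j hj
      unfold padVec
      simp [show j < N by omega, hf]
    simp [Set.mem_preimage, this]
  rw [hset, ← MeasureTheory.Measure.map_apply hfm hEv]
  exact hac (volume_resid_zero N x l h1 hlN)

lemma ae_no_tie (N : ℕ) (hmeas : Measurable s)
    (hac : P.map (fun ω => fun i : Fin N => s ω i) ≪ (volume : Measure (Fin N → ℝ)))
    (x : ℕ → ℝ) :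
    ∀ᵐ ω ∂P, ∀ j, 1 ≤ j → j ≤ N → resid x (s ω) j ≠ 0 := by
  rw [MeasureTheory.ae_all_iff]
  intro j
  by_cases hj : 1 ≤ j ∧ j ≤ N
  · have h0 := P_resid_tie_zero P s N hmeas hac x j hj.1 hj.2
    rw [MeasureTheory.ae_iff]
    apply MeasureTheory.measure_mono_null _ h0
    intro ω hω
    simp only [Set.mem_setOf_eq] at hω ⊢
    push_neg at hω
    exact hω.2.2
  · filter_upwards with ω h1 h2
    exact absurd ⟨h1, h2⟩ hj

end Aux3
section Aux4

open Finset

/-- `projF N k` is the `k`-th coordinate projection (0-based), or `0` out of range. -/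
noncomputable def projF (N : ℕ) (k : ℕ) : (Fin N → ℝ) →L[ℝ] ℝ :=
  if h : k < N then ContinuousLinearMap.proj (R := ℝ) (φ := fun _ : Fin N => ℝ) ⟨k, h⟩ else 0

/-- The derivative of `y ↦ resid (demandOf N y) w l`, recursively. -/
noncomputable def Lder (N : ℕ) (ξ : ℕ → ℝ) : ℕ → ((Fin N → ℝ) →L[ℝ] ℝ)
  | 0 => 0
  | l + 1 => (if 0 < ξ l then Lder N ξ l else 0) - projF N l

lemma demandOf_eq (N : ℕ) (l : ℕ) (hl : l < N) :
    (fun y : Fin N → ℝ => demandOf N y (l + 1)) = fun y => y ⟨l, hl⟩ := by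
  funext y
  unfold demandOf
  rw [dif_pos ⟨by omega, by omega⟩]
  congr 1

lemma hasFDerivAt_proj (N : ℕ) (l : ℕ) (hl : l < N) (y₀ : Fin N → ℝ) :
    HasFDerivAt (fun y : Fin N → ℝ => demandOf N y (l + 1)) (projF N l) y₀ := by
  rw [demandOf_eq N l hl]
  unfold projF
  rw [dif_pos hl]
  exact (ContinuousLinearMap.proj (R := ℝ) (φ := fun _ : Fin N => ℝ) ⟨l, hl⟩).hasFDerivAt

lemma hasFDerivAt_resid (N : ℕ) (w : ℕ → ℝ) (y₀ : Fin N → ℝ) :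
    ∀ l, l ≤ N → (∀ j, 1 ≤ j → j < l → resid (demandOf N y₀) w j ≠ 0) →
    HasFDerivAt (fun y => resid (demandOf N y) w l)
      (Lder N (fun j => resid (demandOf N y₀) w j) l) y₀ := by
  intro l
  induction l with
  | zero =>
    intro _ _
    show HasFDerivAt (fun _ : Fin N → ℝ => (0 : ℝ)) _ y₀
    simpa [Lder] using hasFDerivAt_const (0 : ℝ) y₀
  | succ l ih =>
    intro hlN hne
    have hmax : HasFDerivAt (fun y => max 0 (resid (demandOf N y) w l))
        (if 0 < resid (demandOf N y₀) w l then
          Lder N (fun j => resid (demandOf N y₀) w j) l else 0) y₀ := by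
      rcases Nat.eq_zero_or_pos l with rfl | hl1
      · rw [if_neg (by simp [resid])]
        show HasFDerivAt (fun _ : Fin N → ℝ => max 0 (0:ℝ)) _ y₀
        simpa using hasFDerivAt_const (max 0 (0:ℝ)) y₀
      · have hne_l : resid (demandOf N y₀) w l ≠ 0 := hne l hl1 (by omega)
        have hcont : ContinuousAt (fun y => resid (demandOf N y) w l) y₀ :=
          (continuous_residy N w l).continuousAt
        rcases hne_l.lt_or_gt with hneg | hpos
        · rw [if_neg (by linarith)]
          have hev : ∀ᶠ y in nhds y₀, resid (demandOf N y) w l < 0 :=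
            hcont.eventually_lt continuousAt_const hneg
          have : (fun y => max 0 (resid (demandOf N y) w l)) =ᶠ[nhds y₀]
              (fun _ => (0 : ℝ)) := by
            filter_upwards [hev] with y hy
            exact max_eq_left hy.le
          exact (hasFDerivAt_const (0:ℝ) y₀).congr_of_eventuallyEq this
        · rw [if_pos hpos]
          have hev : ∀ᶠ y in nhds y₀, 0 < resid (demandOf N y) w l :=
            continuousAt_const.eventually_lt hcont hpos
          have heq : (fun y => max 0 (resid (demandOf N y) w l)) =ᶠ[nhds y₀]
              (fun y => resid (demandOf N y) w l) := by
            filter_upwards [hev] with y hy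
            exact max_eq_right hy.le
          exact (ih (by omega) (fun j h1 h2 => hne j h1 (by omega))).congr_of_eventuallyEq
            heq
    have hproj := hasFDerivAt_proj N l (by omega) y₀
    have := (hmax.add_const (w l)).sub hproj
    show HasFDerivAt (fun y => max 0 (resid (demandOf N y) w l) + w l - demandOf N y (l+1)) _ y₀
    exact this

lemma hasFDerivAt_maxneg_resid (N : ℕ) (w : ℕ → ℝ) (y₀ : Fin N → ℝ) (l : ℕ)
    (hl1 : 1 ≤ l) (hlN : l ≤ N)
    (hne : ∀ j, 1 ≤ j → j ≤ l → resid (demandOf N y₀) w j ≠ 0) :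
    HasFDerivAt (fun y => max 0 (-(resid (demandOf N y) w l)))
      (if resid (demandOf N y₀) w l < 0 then
        -(Lder N (fun j => resid (demandOf N y₀) w j) l) else 0) y₀ := by
  have hne_l : resid (demandOf N y₀) w l ≠ 0 := hne l hl1 le_rfl
  have hcont : ContinuousAt (fun y => resid (demandOf N y) w l) y₀ :=
    (continuous_residy N w l).continuousAt
  have hD := hasFDerivAt_resid N w y₀ l hlN (fun j h1 h2 => hne j h1 (by omega))
  rcases hne_l.lt_or_gt with hneg | hpos
  · rw [if_pos hneg]
    have hev : ∀ᶠ y in nhds y₀, resid (demandOf N y) w l < 0 :=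
      hcont.eventually_lt continuousAt_const hneg
    have heq : (fun y => max 0 (-(resid (demandOf N y) w l))) =ᶠ[nhds y₀]
        (fun y => -(resid (demandOf N y) w l)) := by
      filter_upwards [hev] with y hy
      exact max_eq_right (by linarith)
    exact hD.neg.congr_of_eventuallyEq heq
  · rw [if_neg (by linarith)]
    have hev : ∀ᶠ y in nhds y₀, 0 < resid (demandOf N y) w l :=
      continuousAt_const.eventually_lt hcont hpos
    have heq : (fun y => max 0 (-(resid (demandOf N y) w l))) =ᶠ[nhds y₀]
        (fun _ => (0:ℝ)) := by
      filter_upwards [hev] with y hy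
      exact max_eq_left (by linarith)
    exact (hasFDerivAt_const (0:ℝ) y₀).congr_of_eventuallyEq heq

lemma Lder_closed_form (N : ℕ) (ξ : ℕ → ℝ)  :
    ∀ l, Lder N ξ l
      = -∑ k ∈ Icc 1 l, (if ∀ j, k ≤ j → j < l → 0 < ξ j then projF N (k-1) else 0) := by
  intro l
  induction l with
  | zero => simp [Lder]
  | succ l ih =>
    rw [show Lder N ξ (l+1) = (if 0 < ξ l then Lder N ξ l else 0) - projF N l from rfl]
    rw [Finset.sum_Icc_succ_top (by omega : 1 ≤ l + 1)]
    rw [if_pos (show ∀ j, l+1 ≤ j → j < l+1 → 0 < ξ j by intro j h1 h2; omega)]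
    simp only [show l + 1 - 1 = l from rfl]
    by_cases hl : 0 < ξ l
    · rw [if_pos hl, ih]
      have : ∀ k ∈ Icc 1 l,
          (if ∀ j, k ≤ j → j < l+1 → 0 < ξ j then projF N (k-1) else 0)
          = (if ∀ j, k ≤ j → j < l → 0 < ξ j then projF N (k-1) else 0) := by
        intro k hk
        apply if_congr _ rfl rfl
        constructor
        · intro h j h1 h2; exact h j h1 (by omega)
        · intro h j h1 h2
          rcases Nat.lt_or_ge j l with h3 | h3
          · exact h j h1 h3
          · have : j = l := by omega
            rw [this]; exact hl
      rw [Finset.sum_congr rfl this]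
      abel
    · rw [if_neg hl]
      have : ∀ k ∈ Icc 1 l,
          (if ∀ j, k ≤ j → j < l+1 → 0 < ξ j then projF N (k-1) else 0) = 0 := by
        intro k hk
        rw [if_neg]
        intro h
        simp only [mem_Icc] at hk
        exact hl (h l hk.2 (by omega))
      rw [Finset.sum_congr rfl this]
      simp

end Aux4
section Aux5

lemma abs_max_zero_neg_le (a : ℝ) : |max 0 (-a)| ≤ |a| := by
  rcases le_total a 0 with h | h
  · rw [max_eq_right (by linarith), abs_neg]
  · rw [max_eq_left (by linarith)]
    simp [abs_nonneg]

lemma abs_maxneg_sub (a b : ℝ) : |max 0 (-a) - max 0 (-b)| ≤ |a - b| := by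
  have h := abs_max_sub_max_le_abs (-a) (-b) 0
  calc |max 0 (-a) - max 0 (-b)| = |max (-a) 0 - max (-b) 0| := by rw [max_comm 0, max_comm 0]
    _ ≤ |(-a) - (-b)| := h
    _ = |a - b| := by rw [abs_sub_comm]; ring_nf

end Aux5

/-- Theorem 2, marginal cost supply curve.  Suppose the law of the
random supply vector `s` is absolutely continuous w.r.t. Lebesgue measure on `ℝ^N` and
has compact support contained in `ℝ₊^N`.  Then `Q*` is differentiable at every
`x ∈ (0,∞)^N`, with partial derivatives `∂Q*(x)/∂x_k = ζ_k(x)` for `k = 1,…,N`;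
i.e. its (Fréchet) derivative at `x` is the linear functional
`h ↦ Σ_{k=1}^N ζ_k(x) h_k`. -/
theorem Qstar_hasFDerivAt_marginal_cost
    (N : ℕ) (hN : 1 ≤ N)
    {Ω : Type*} [MeasurableSpace Ω] (P : Measure Ω) [IsProbabilityMeasure P]
    (s : Ω → ℕ → ℝ) (hmeas : Measurable s)
    (c0 : ℝ) (hc0 : 0 < c0)
    (K : Set (ℕ → ℝ)) (hK : IsCompact K)
    (hKpos : K ⊆ {w : ℕ → ℝ | ∀ j, j < N → 0 ≤ w j})
    (hsupp : ∀ᵐ ω ∂P, s ω ∈ K)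
    (hac : P.map (fun ω => fun i : Fin N => s ω i) ≪ (volume : Measure (Fin N → ℝ))) :
    ∀ y : Fin N → ℝ, (∀ i, 0 < y i) →
      HasFDerivAt (Qstar N P s c0)
        (∑ i : Fin N,
          zetaPrice N P s c0 (demandOf N y) (i.1 + 1) •
            ContinuousLinearMap.proj (R := ℝ) (φ := fun _ : Fin N => ℝ) i)
        y := by
  intro y hy
  classical
  set x₀ : ℕ → ℝ := demandOf N y with hx₀
  -- the events
  set E : ℕ → ℕ → Set Ω := fun l k =>
    {ω | resid x₀ (s ω) l < 0 ∧ ∀ j, k ≤ j → j < l → 0 < resid x₀ (s ω) j} with hE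
  have hrm : ∀ l, Measurable fun ω => resid x₀ (s ω) l :=
    fun l => measurable_resid_omega s hmeas x₀ l
  have hEmeas : ∀ l k, MeasurableSet (E l k) := by
    intro l k
    rw [hE]
    simp only
    rw [Set.setOf_and]
    apply MeasurableSet.inter (measurableSet_lt (hrm l) measurable_const)
    rw [Set.setOf_forall]
    apply MeasurableSet.iInter
    intro j
    by_cases h1 : k ≤ j ∧ j < l
    · have : {ω | k ≤ j → j < l → 0 < resid x₀ (s ω) j} = {ω | 0 < resid x₀ (s ω) j} := by
        ext ω; simp [h1.1, h1.2]
      rw [this]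
      exact measurableSet_lt measurable_const (hrm j)
    · have : {ω | k ≤ j → j < l → 0 < resid x₀ (s ω) j} = Set.univ := by
        ext ω
        simp only [Set.mem_setOf_eq, Set.mem_univ, iff_true]
        intro h2 h3
        exact absurd ⟨h2, h3⟩ h1
      rw [this]
      exact MeasurableSet.univ
  -- the pointwise derivative
  set F' : Ω → (Fin N → ℝ) →L[ℝ] ℝ := fun ω => ∑ l ∈ Finset.Icc 1 N, ∑ k ∈ Finset.Icc 1 l,
    Set.indicator (E l k) (fun _ => (1:ℝ)) ω • projF N (k-1) with hF'
  -- a.e. differentiability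
  have h_diff : ∀ᵐ ω ∂P, HasFDerivAt
      (fun z => ∑ l ∈ Finset.Icc 1 N, max 0 (-(resid (demandOf N z) (s ω) l))) (F' ω) y := by
    filter_upwards [ae_no_tie P s N hmeas hac x₀] with ω hω
    have hsum : HasFDerivAt
        (fun z => ∑ l ∈ Finset.Icc 1 N, max 0 (-(resid (demandOf N z) (s ω) l)))
        (∑ l ∈ Finset.Icc 1 N, (if resid x₀ (s ω) l < 0 then
          -(Lder N (fun j => resid x₀ (s ω) j) l) else 0)) y := by
      apply HasFDerivAt.fun_sum
      intro l hl
      simp only [Finset.mem_Icc] at hl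
      exact hasFDerivAt_maxneg_resid N (s ω) y l hl.1 hl.2
        (fun j h1 h2 => hω j h1 (le_trans h2 hl.2))
    have heq : F' ω = ∑ l ∈ Finset.Icc 1 N, (if resid x₀ (s ω) l < 0 then
        -(Lder N (fun j => resid x₀ (s ω) j) l) else 0) := by
      rw [hF']
      apply Finset.sum_congr rfl
      intro l hl
      by_cases hneg : resid x₀ (s ω) l < 0
      · rw [if_pos hneg, Lder_closed_form, neg_neg]
        apply Finset.sum_congr rfl
        intro k hk
        by_cases hc : ∀ j, k ≤ j → j < l → 0 < resid x₀ (s ω) j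
        · rw [Set.indicator_of_mem (by exact ⟨hneg, hc⟩), if_pos hc, one_smul]
        · rw [Set.indicator_of_notMem (fun hmem => hc hmem.2), if_neg hc, zero_smul]
      · rw [if_neg hneg]
        apply Finset.sum_eq_zero
        intro k hk
        rw [Set.indicator_of_notMem (fun hmem => hneg hmem.1), zero_smul]
    rw [heq]
    exact hsum
  -- measurability in ω
  have hFzmeas : ∀ z : Fin N → ℝ,
      Measurable fun ω => ∑ l ∈ Finset.Icc 1 N, max 0 (-(resid (demandOf N z) (s ω) l)) :=
    fun z => Finset.measurable_sum _
      (fun l _ => measurable_const.max (measurable_resid_omega s hmeas _ l).neg)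
  have hInd : ∀ l k, Measurable (Set.indicator (E l k) (fun _ : Ω => (1:ℝ))) :=
    fun l k => measurable_const.indicator (hEmeas l k)
  have hF'_meas : AEStronglyMeasurable F' P := by
    rw [hF']
    apply Finset.aestronglyMeasurable_fun_sum
    intro l _
    apply Finset.aestronglyMeasurable_fun_sum
    intro k _
    exact ((hInd l k).aestronglyMeasurable).smul_const _
  -- integrability of the integrand at y
  obtain ⟨M, hM⟩ := hK.exists_bound_of_continuousOn
    (f := fun w : ℕ → ℝ => ∑ j ∈ Finset.range N, |w j|)
    (Continuous.continuousOn (continuous_finset_sum _ fun j _ => (continuous_apply j).abs))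
  have hMb : ∀ w ∈ K, ∀ j, j < N → |w j| ≤ M := by
    intro w hw j hj
    have h1 := hM w hw
    rw [Real.norm_eq_abs, abs_of_nonneg (Finset.sum_nonneg fun _ _ => abs_nonneg _)] at h1
    exact le_trans (Finset.single_le_sum (f := fun i => |w i|) (fun i _ => abs_nonneg _) (Finset.mem_range.mpr hj)) h1
  have hF_int : Integrable
      (fun ω => ∑ l ∈ Finset.Icc 1 N, max 0 (-(resid (demandOf N y) (s ω) l))) P := by
    apply MeasureTheory.Integrable.mono'
      (integrable_const (∑ _l ∈ Finset.Icc 1 N,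
        ((∑ _j ∈ Finset.range N, M) + ∑ j ∈ Finset.Icc 1 N, |x₀ j|)))
      (hFzmeas y).aestronglyMeasurable
    filter_upwards [hsupp] with ω hω
    rw [Real.norm_eq_abs]
    refine le_trans (Finset.abs_sum_le_sum_abs _ _) (Finset.sum_le_sum ?_)
    intro l hl
    simp only [Finset.mem_Icc] at hl
    refine le_trans (abs_max_zero_neg_le _) (le_trans (abs_resid_le _ _ l) ?_)
    apply add_le_add
    · refine le_trans (Finset.sum_le_sum_of_subset_of_nonneg
        (Finset.range_subset_range.mpr hl.2) (fun _ _ _ => abs_nonneg _)) ?_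
      exact Finset.sum_le_sum (fun j hj => hMb (s ω) hω j (Finset.mem_range.mp hj))
    · exact Finset.sum_le_sum_of_subset_of_nonneg
        (Finset.Icc_subset_Icc_right hl.2) (fun _ _ _ => abs_nonneg _)
  -- Lipschitz bound
  have h_lip : ∀ᵐ ω ∂P, LipschitzOnWith (Real.nnabs ((N:ℝ) * N))
      (fun z => ∑ l ∈ Finset.Icc 1 N, max 0 (-(resid (demandOf N z) (s ω) l)))
      (Metric.ball y 1) := by
    filter_upwards with ω
    apply LipschitzWith.lipschitzOnWith
    apply LipschitzWith.of_dist_le_mul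
    intro z z'
    rw [Real.coe_nnabs, abs_of_nonneg (by positivity), Real.dist_eq]
    have hterm : ∀ l, 1 ≤ l → l ≤ N →
        |max 0 (-(resid (demandOf N z) (s ω) l)) - max 0 (-(resid (demandOf N z') (s ω) l))|
          ≤ (N:ℝ) * dist z z' := by
      intro l h1 h2
      refine le_trans (abs_maxneg_sub _ _) (le_trans (abs_resid_sub_resid_le _ _ _ l) ?_)
      have hd : ∀ j, |demandOf N z j - demandOf N z' j| ≤ dist z z' := by
        intro j
        unfold demandOf
        by_cases h : 1 ≤ j ∧ j ≤ N
        · rw [dif_pos h, dif_pos h, ← Real.dist_eq]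
          exact dist_le_pi_dist z z' _
        · rw [dif_neg h, dif_neg h]
          simpa using dist_nonneg
      calc ∑ j ∈ Finset.Icc 1 l, |demandOf N z j - demandOf N z' j|
          ≤ ∑ _j ∈ Finset.Icc 1 l, dist z z' := Finset.sum_le_sum (fun j _ => hd j)
        _ = (l : ℝ) * dist z z' := by
            rw [Finset.sum_const, nsmul_eq_mul, Nat.card_Icc]
            norm_num
        _ ≤ (N:ℝ) * dist z z' := by
            apply mul_le_mul_of_nonneg_right _ dist_nonneg
            exact_mod_cast h2
    calc |∑ l ∈ Finset.Icc 1 N, max 0 (-(resid (demandOf N z) (s ω) l))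
          - ∑ l ∈ Finset.Icc 1 N, max 0 (-(resid (demandOf N z') (s ω) l))|
        = |∑ l ∈ Finset.Icc 1 N, (max 0 (-(resid (demandOf N z) (s ω) l))
            - max 0 (-(resid (demandOf N z') (s ω) l)))| := by rw [Finset.sum_sub_distrib]
      _ ≤ ∑ l ∈ Finset.Icc 1 N, |max 0 (-(resid (demandOf N z) (s ω) l))
            - max 0 (-(resid (demandOf N z') (s ω) l))| := Finset.abs_sum_le_sum_abs _ _
      _ ≤ ∑ _l ∈ Finset.Icc 1 N, (N:ℝ) * dist z z' := by
          apply Finset.sum_le_sum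
          intro l hl
          simp only [Finset.mem_Icc] at hl
          exact hterm l hl.1 hl.2
      _ = (N:ℝ) * N * dist z z' := by
          rw [Finset.sum_const, nsmul_eq_mul, Nat.card_Icc]
          push_cast
          ring
  -- differentiate under the integral
  obtain ⟨hF'int, hderiv⟩ := hasFDerivAt_integral_of_dominated_loc_of_lip
    (μ := P) (x₀ := y)
    (F := fun z ω => ∑ l ∈ Finset.Icc 1 N, max 0 (-(resid (demandOf N z) (s ω) l)))
    (F' := F') (bound := fun _ => (N:ℝ) * N) (Metric.ball_mem_nhds y one_pos)
    (Filter.Eventually.of_forall fun z => (hFzmeas z).aestronglyMeasurable)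
    hF_int hF'_meas h_lip (integrable_const _) h_diff
  have hQ : HasFDerivAt (Qstar N P s c0) (c0 • ∫ ω, F' ω ∂P) y := by
    unfold Qstar
    exact hderiv.const_mul c0
  -- compute the integral of F'
  have hIint : ∀ l k, Integrable
      (fun ω => Set.indicator (E l k) (fun _ => (1:ℝ)) ω • projF N (k-1)) P := by
    intro l k
    apply Integrable.smul_const
    refine Integrable.mono' (integrable_const (1:ℝ)) (hInd l k).aestronglyMeasurable ?_
    filter_upwards with ω
    rw [Real.norm_eq_abs]
    by_cases h : ω ∈ E l k
    · rw [Set.indicator_of_mem h]; norm_num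
    · rw [Set.indicator_of_notMem h]; norm_num
  have hint1 : ∫ ω, F' ω ∂P
      = ∑ l ∈ Finset.Icc 1 N, ∑ k ∈ Finset.Icc 1 l, (P (E l k)).toReal • projF N (k-1) := by
    rw [hF']
    rw [MeasureTheory.integral_finset_sum _
      (fun l _ => MeasureTheory.integrable_finset_sum _ (fun k _ => hIint l k))]
    apply Finset.sum_congr rfl
    intro l _
    rw [MeasureTheory.integral_finset_sum _ (fun k _ => hIint l k)]
    apply Finset.sum_congr rfl
    intro k _
    rw [integral_smul_const, MeasureTheory.integral_indicator_const (1:ℝ) (hEmeas l k),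
      smul_eq_mul, mul_one]
    rfl
  have hint2 : ∑ l ∈ Finset.Icc 1 N, ∑ k ∈ Finset.Icc 1 l, (P (E l k)).toReal • projF N (k-1)
      = ∑ k ∈ Finset.Icc 1 N, ∑ l ∈ Finset.Icc k N, (P (E l k)).toReal • projF N (k-1) := by
    apply Finset.sum_comm'
    intro l k
    simp only [Finset.mem_Icc]
    omega
  -- tie events: < 0 versus ≤ 0
  have hEk : ∀ k, 1 ≤ k → k ≤ N →
      (P (E k k)).toReal = (P {ω | resid x₀ (s ω) k ≤ 0}).toReal := by
    intro k hk1 hkN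
    apply congrArg
    apply measure_congr
    refine (MeasureTheory.ae_eq_set).mpr ⟨?_, ?_⟩
    · apply MeasureTheory.measure_mono_null _ (P_resid_tie_zero P s N hmeas hac x₀ k hk1 hkN)
      rintro ω ⟨⟨h1, _⟩, h2⟩
      exact (h2 h1.le).elim
    · apply MeasureTheory.measure_mono_null _ (P_resid_tie_zero P s N hmeas hac x₀ k hk1 hkN)
      rintro ω ⟨h1, h2⟩
      simp only [Set.mem_setOf_eq] at h1 h2 ⊢
      have hnlt : ¬ resid x₀ (s ω) k < 0 := fun hlt => h2 ⟨hlt, fun j hj1 hj2 => by omega⟩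
      exact le_antisymm h1 (not_lt.mp hnlt)
  have hElk : ∀ k l, 1 ≤ k → k + 1 ≤ l → l ≤ N →
      (P (E l k)).toReal = (P {ω | (∀ j, k ≤ j → j < l → 0 < resid x₀ (s ω) j)
        ∧ resid x₀ (s ω) l ≤ 0}).toReal := by
    intro k l hk1 hkl hlN
    apply congrArg
    apply measure_congr
    refine (MeasureTheory.ae_eq_set).mpr ⟨?_, ?_⟩
    · apply MeasureTheory.measure_mono_null _
        (P_resid_tie_zero P s N hmeas hac x₀ l (by omega) hlN)
      rintro ω ⟨⟨h1, h2⟩, h3⟩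
      exact (h3 ⟨h2, h1.le⟩).elim
    · apply MeasureTheory.measure_mono_null _
        (P_resid_tie_zero P s N hmeas hac x₀ l (by omega) hlN)
      rintro ω ⟨⟨h1, h2⟩, h3⟩
      simp only [Set.mem_setOf_eq] at h2 h3 ⊢
      have hnlt : ¬ resid x₀ (s ω) l < 0 := fun hlt => h3 ⟨hlt, h1⟩
      exact le_antisymm h2 (not_lt.mp hnlt)
  -- assemble
  have hfinal : c0 • ∫ ω, F' ω ∂P
      = ∑ i : Fin N, zetaPrice N P s c0 x₀ (i.1 + 1) •
          ContinuousLinearMap.proj (R := ℝ) (φ := fun _ : Fin N => ℝ) i := by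
    rw [hint1, hint2, Finset.smul_sum]
    have hsplit : ∀ k ∈ Finset.Icc 1 N,
        c0 • ∑ l ∈ Finset.Icc k N, (P (E l k)).toReal • projF N (k-1)
          = (fun m => zetaPrice N P s c0 x₀ (m + 1) • projF N m) (k - 1) := by
      intro k hk
      simp only [Finset.mem_Icc] at hk
      have hins : Finset.Icc k N = insert k (Finset.Icc (k+1) N) := by
        ext m
        simp only [Finset.mem_Icc, Finset.mem_insert]
        omega
      rw [hins, Finset.sum_insert (by simp [Finset.mem_Icc])]
      rw [smul_add, smul_smul, Finset.smul_sum]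
      have hk1 : k - 1 + 1 = k := by omega
      simp only [hk1]
      unfold zetaPrice
      rw [← hEk k hk.1 hk.2]
      have : ∀ l ∈ Finset.Icc (k+1) N,
          c0 • ((P (E l k)).toReal • projF N (k-1))
            = (c0 * (P (E l k)).toReal) • projF N (k-1) := by
        intro l _
        rw [smul_smul]
      rw [Finset.sum_congr rfl this, ← Finset.sum_smul]
      rw [← add_smul]
      congr 1
      rw [mul_add, ← Finset.mul_sum]
      congr 1
      congr 1
      apply Finset.sum_congr rfl
      intro l hl
      simp only [Finset.mem_Icc] at hl
      rw [hElk k l hk.1 hl.1 hl.2]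
    rw [Finset.sum_congr rfl hsplit]
    rw [← Finset.Ico_add_one_right_eq_Icc, Finset.sum_Ico_eq_sum_range]
    simp only [Nat.add_sub_cancel, Nat.succ_sub_one]
    rw [show (fun i : Fin N => zetaPrice N P s c0 x₀ (i.1 + 1) •
        ContinuousLinearMap.proj (R := ℝ) (φ := fun _ : Fin N => ℝ) i)
        = fun i : Fin N => (fun m => zetaPrice N P s c0 x₀ (m + 1) • projF N m) i.1 from ?_]
    · rw [Fin.sum_univ_eq_sum_range (fun m => zetaPrice N P s c0 x₀ (m + 1) • projF N m) N]
      apply Finset.sum_congr rfl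
      intro j hj
      have h1j : 1 + j - 1 = j := by omega
      simp only [h1j]
    · funext i
      simp only
      congr 1
      unfold projF
      rw [dif_pos i.isLt]
  rw [← hfinal]
  exact hQ
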